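/- Let P be a poset with least element 0 and let I, Z ⊆ P be subsets such that both I and Z are Z-complete and Z is Z-central. Then I ∩ Z is a complete ideal of the subposet Z and an upper complete sublattice of P. -/
import Mathlib


/-- `S` is `Z`-disjoint: there is `f : S → Z` with `p ≤ f p` and `f p ∧ f q = 0`
for distinct `p, q ∈ S`. -/
def ZDisjoint {β : Type*} [PartialOrder β] [OrderBot β] (Z S : Set β) : Prop :=
  ∃ f : β → β, (∀ p ∈ S, f p ∈ Z ∧ p ≤ f p) ∧
    ∀ p ∈ S, ∀ q ∈ S, p ≠ q → Disjoint (f p) (f q)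

/-- `I` is `Z`-complete: every `Z`-disjoint `S ⊆ I` has a supremum lying in `I`, and
whenever `{p, q}` is `Z`-disjoint with supremum in `I`, both `p` and `q` lie in `I`. -/
def ZComplete {β : Type*} [PartialOrder β] [OrderBot β] (Z I : Set β) : Prop :=
  (∀ S ⊆ I, ZDisjoint Z S → ∃ s, IsLUB S s ∧ s ∈ I) ∧
  (∀ p q s, ZDisjoint Z {p, q} → IsLUB {p, q} s → s ∈ I → p ∈ I ∧ q ∈ I)

/-- `Z` is `S`-central: for every `p ∈ S` and `y ∈ Z` there is `z ∈ Z` with `y ∧ z = 0`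
and `p` the supremum of some `q ≤ y` and `r ≤ z`. -/
def SCentral {β : Type*} [PartialOrder β] [OrderBot β] (Z S : Set β) : Prop :=
  ∀ p ∈ S, ∀ y ∈ Z, ∃ z ∈ Z, Disjoint y z ∧ ∃ q r, q ≤ y ∧ r ≤ z ∧ IsLUB {q, r} p

/-- A pair `{p, b}` with `p ≤ y ∈ Z`, `b ≤ z ∈ Z` and `y ⊓ z = 0` is `Z`-disjoint. -/
lemma zdisj_pair {α : Type*} [PartialOrder α] [OrderBot α] (Z : Set α) {p b y z : α}
    (hy : y ∈ Z) (hz : z ∈ Z) (hpy : p ≤ y) (hbz : b ≤ z) (hdis : Disjoint y z) :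
    ZDisjoint Z {p, b} := by
  classical
  refine ⟨fun x => if x = p then y else z, ?_, ?_⟩
  · intro x hx
    simp only [Set.mem_insert_iff, Set.mem_singleton_iff] at hx
    show (if x = p then y else z) ∈ Z ∧ x ≤ if x = p then y else z
    by_cases h : x = p
    · rw [if_pos h]; exact ⟨hy, h ▸ hpy⟩
    · rw [if_neg h]; exact ⟨hz, (hx.resolve_left h) ▸ hbz⟩
  · intro x hx w hw hne
    simp only [Set.mem_insert_iff, Set.mem_singleton_iff] at hx hw
    show Disjoint (if x = p then y else z) (if w = p then y else z)
    by_cases h1 : x = p <;> by_cases h2 : w = p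
    · exact absurd (h1.trans h2.symm) hne
    · rw [if_pos h1, if_neg h2]; exact hdis
    · rw [if_neg h1, if_pos h2]; exact hdis.symm
    · exact absurd ((hx.resolve_left h1).trans (hw.resolve_left h2).symm) hne

/-- If `I` and `Z` are `Z`-complete and `Z` is `Z`-central then `I ∩ Z` is a complete
ideal of the subposet `Z` (a lower set in `Z` that is completely upwards directed)
and an upper complete sublattice of `P`. -/
theorem stmt0 {α : Type*} [PartialOrder α] [OrderBot α] (I Z : Set α)
    (hI : ZComplete Z I) (hZ : ZComplete Z Z) (hcen : SCentral Z Z) :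
    ((∀ p ∈ Z, ∀ q ∈ I ∩ Z, p ≤ q → p ∈ I ∩ Z) ∧
      (∀ S ⊆ I ∩ Z, ∃ q ∈ I ∩ Z, ∀ p ∈ S, p ≤ q)) ∧
    (∀ S ⊆ I ∩ Z, ∃ s, IsLUB S s ∧ s ∈ I ∩ Z) := by
  -- Step 1: I ∩ Z is a lower set in Z.
  have hlow : ∀ p ∈ Z, ∀ q ∈ I ∩ Z, p ≤ q → p ∈ I ∩ Z := by
    intro p hpZ q hq hpq
    obtain ⟨z, hzZ, hdis, a, b, haP, hbz, hlub⟩ := hcen q hq.2 p hpZ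
    have hbq : b ≤ q := hlub.1 (by simp)
    have hq' : IsLUB {p, b} q := by
      constructor
      · intro x hx
        rcases hx with rfl | hx
        · exact hpq
        · rw [Set.mem_singleton_iff] at hx; subst hx; exact hbq
      · intro u hu
        apply hlub.2
        intro x hx
        rcases hx with rfl | hx
        · exact le_trans haP (hu (Set.mem_insert p _))
        · rw [Set.mem_singleton_iff] at hx; subst hx
          exact hu (by simp)
    have hdisj : ZDisjoint Z {p, b} := zdisj_pair Z hpZ hzZ le_rfl hbz hdis
    exact ⟨(hI.2 p b q hdisj hq' hq.1).1, hpZ⟩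
  -- Step 2: every subset of I ∩ Z has a supremum lying in I ∩ Z.
  have hsup : ∀ S ⊆ I ∩ Z, ∃ s, IsLUB S s ∧ s ∈ I ∩ Z := by
    intro S hS
    set 𝒟 : Set (Set α) := {D | D ⊆ I ∩ Z ∧ (∀ d ∈ D, ∃ p ∈ S, d ≤ p) ∧
      D.Pairwise Disjoint} with h𝒟
    obtain ⟨D, hDmax⟩ := zorn_subset 𝒟 (by
      intro c hc hchain
      refine ⟨⋃₀ c, ⟨?_, ?_, ?_⟩, fun s hs => Set.subset_sUnion_of_mem hs⟩
      · intro d hd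
        obtain ⟨t, htc, hdt⟩ := hd
        exact (hc htc).1 hdt
      · intro d hd
        obtain ⟨t, htc, hdt⟩ := hd
        exact (hc htc).2.1 d hdt
      · intro x hx y hy hne
        obtain ⟨t, htc, hxt⟩ := hx
        obtain ⟨u, huc, hyu⟩ := hy
        rcases hchain.total htc huc with h | h
        · exact (hc huc).2.2 (h hxt) hyu hne
        · exact (hc htc).2.2 hxt (h hyu) hne)
    have hD : D ∈ 𝒟 := hDmax.1
    have hDdisj : ZDisjoint Z D :=
      ⟨id, fun d hd => ⟨(hD.1 hd).2, le_refl d⟩, fun x hx y hy hne => hD.2.2 hx hy hne⟩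
    obtain ⟨s, hslub, hsI⟩ := hI.1 D (fun d hd => (hD.1 hd).1) hDdisj
    obtain ⟨s', hslub', hsZ'⟩ := hZ.1 D (fun d hd => (hD.1 hd).2) hDdisj
    have hsZ : s ∈ Z := (hslub'.unique hslub) ▸ hsZ'
    -- s is an upper bound of S
    have hub : ∀ p ∈ S, p ≤ s := by
      intro p hp
      have hpIZ : p ∈ I ∩ Z := hS hp
      obtain ⟨z, hzZ, hdis, a, b, has, hbz, hlub⟩ := hcen p hpIZ.2 s hsZ
      have habdisj : ZDisjoint Z {a, b} := zdisj_pair Z hsZ hzZ has hbz hdis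
      obtain ⟨haZ, hbZ⟩ := hZ.2 a b p habdisj hlub hpIZ.2
      have hbp : b ≤ p := hlub.1 (by simp)
      have hbIZ : b ∈ I ∩ Z := hlow b hbZ p hpIZ hbp
      -- b is disjoint from every element of D
      have hbD : ∀ d ∈ D, Disjoint d b := by
        intro d hd
        intro c hcd hcb
        exact hdis (le_trans hcd (hslub.1 hd)) (le_trans hcb hbz)
      -- b ∈ D by maximality
      have hbmem : b ∈ D := by
        by_contra hbn
        have hins : insert b D ∈ 𝒟 := by
          refine ⟨?_, ?_, ?_⟩
          · intro d hd
            rcases hd with rfl | hd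
            · exact hbIZ
            · exact hD.1 hd
          · intro d hd
            rcases hd with rfl | hd
            · exact ⟨p, hp, hbp⟩
            · exact hD.2.1 d hd
          · intro x hx y hy hne
            rcases hx with rfl | hx
            · rcases hy with rfl | hy
              · exact absurd rfl hne
              · exact (hbD y hy).symm
            · rcases hy with rfl | hy
              · exact hbD x hx
              · exact hD.2.2 hx hy hne
        exact hbn (hDmax.2 hins (Set.subset_insert b D) (Set.mem_insert b D))
      -- hence b = ⊥, so p = a ≤ s
      have hbbot : b = ⊥ := le_antisymm (hdis (hslub.1 hbmem) hbz) bot_le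
      have hpa : p ≤ a := by
        apply hlub.2
        intro x hx
        rcases hx with rfl | hx
        · exact le_refl x
        · rw [Set.mem_singleton_iff] at hx; subst hx
          simp [hbbot]
      exact le_trans hpa has
    refine ⟨s, ⟨hub, fun u hu => hslub.2 ?_⟩, hsI, hsZ⟩
    intro d hd
    obtain ⟨p, hp, hdp⟩ := hD.2.1 d hd
    exact le_trans hdp (hu hp)
  exact ⟨⟨hlow, fun S hS => by
    obtain ⟨s, hslub, hs⟩ := hsup S hS
    exact ⟨s, hs, fun p hp => hslub.1 hp⟩⟩, hsup⟩
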